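/- For the 4×4 matrix representation of g_μ, the element r = J ⊗ P₁ - P₁ ⊗ J + D ⊗ P₂ - P₂ ⊗ D (in the tensor square of the matrix algebra) satisfies the classical Yang–Baxter equation [r₁₂, r₁₃] + [r₁₂, r₂₃] + [r₁₃, r₂₃] = 0. -/

import Mathlib

open Matrix Kronecker

def ybJ (μ : ℝ) : Matrix (Fin 4) (Fin 4) ℝ :=
  !![0, -μ, 0, 0; -1, 0, 0, 0; 0, 0, 0, 0; 0, 0, 0, 0]

def ybP1 : Matrix (Fin 4) (Fin 4) ℝ :=
  !![0, 0, 0, 0; 0, 0, 0, 0; 0, 1, 0, 0; 0, 1, 0, 0]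

def ybP2 : Matrix (Fin 4) (Fin 4) ℝ :=
  !![0, 0, 0, 0; 0, 0, 0, 0; 1, 0, 0, 0; 1, 0, 0, 0]

def ybD : Matrix (Fin 4) (Fin 4) ℝ :=
  !![0, 0, 0, 0; 0, 0, 0, 0; 0, 0, 0, 1; 0, 0, 1, 0]

/-- r₁₂ for r = J⊗P₁ - P₁⊗J + D⊗P₂ - P₂⊗D, realized by Kronecker products. -/
noncomputable def ybR12 (μ : ℝ) : Matrix ((Fin 4 × Fin 4) × Fin 4) ((Fin 4 × Fin 4) × Fin 4) ℝ :=
  ybJ μ ⊗ₖ ybP1 ⊗ₖ (1 : Matrix (Fin 4) (Fin 4) ℝ)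
    - ybP1 ⊗ₖ ybJ μ ⊗ₖ (1 : Matrix (Fin 4) (Fin 4) ℝ)
    + ybD ⊗ₖ ybP2 ⊗ₖ (1 : Matrix (Fin 4) (Fin 4) ℝ)
    - ybP2 ⊗ₖ ybD ⊗ₖ (1 : Matrix (Fin 4) (Fin 4) ℝ)

/-- r₁₃. -/
noncomputable def ybR13 (μ : ℝ) : Matrix ((Fin 4 × Fin 4) × Fin 4) ((Fin 4 × Fin 4) × Fin 4) ℝ :=
  ybJ μ ⊗ₖ (1 : Matrix (Fin 4) (Fin 4) ℝ) ⊗ₖ ybP1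
    - ybP1 ⊗ₖ (1 : Matrix (Fin 4) (Fin 4) ℝ) ⊗ₖ ybJ μ
    + ybD ⊗ₖ (1 : Matrix (Fin 4) (Fin 4) ℝ) ⊗ₖ ybP2
    - ybP2 ⊗ₖ (1 : Matrix (Fin 4) (Fin 4) ℝ) ⊗ₖ ybD

/-- r₂₃. -/
noncomputable def ybR23 (μ : ℝ) : Matrix ((Fin 4 × Fin 4) × Fin 4) ((Fin 4 × Fin 4) × Fin 4) ℝ :=
  (1 : Matrix (Fin 4) (Fin 4) ℝ) ⊗ₖ ybJ μ ⊗ₖ ybP1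
    - (1 : Matrix (Fin 4) (Fin 4) ℝ) ⊗ₖ ybP1 ⊗ₖ ybJ μ
    + (1 : Matrix (Fin 4) (Fin 4) ℝ) ⊗ₖ ybD ⊗ₖ ybP2
    - (1 : Matrix (Fin 4) (Fin 4) ℝ) ⊗ₖ ybP2 ⊗ₖ ybD


section aux
open Matrix

lemma ybJ_P1 (μ : ℝ) : ybJ μ * ybP1 = 0 := by
  ext i j
  fin_cases i <;> fin_cases j <;>
    norm_num [ybJ, ybP1, ybP2, ybD, Matrix.mul_apply, Fin.sum_univ_four,
      Matrix.cons_val_zero, Matrix.cons_val_one, Matrix.head_cons,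
      Matrix.cons_val', Matrix.head_fin_const, Matrix.empty_val',
      Matrix.cons_val_fin_one, Matrix.vecHead, Matrix.vecTail, Matrix.cons_val_two, Matrix.cons_val_three]
lemma ybJ_P2 (μ : ℝ) : ybJ μ * ybP2 = 0 := by
  ext i j
  fin_cases i <;> fin_cases j <;>
    norm_num [ybJ, ybP1, ybP2, ybD, Matrix.mul_apply, Fin.sum_univ_four,
      Matrix.cons_val_zero, Matrix.cons_val_one, Matrix.head_cons,
      Matrix.cons_val', Matrix.head_fin_const, Matrix.empty_val',
      Matrix.cons_val_fin_one, Matrix.vecHead, Matrix.vecTail, Matrix.cons_val_two, Matrix.cons_val_three]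
lemma ybJ_D (μ : ℝ) : ybJ μ * ybD = 0 := by
  ext i j
  fin_cases i <;> fin_cases j <;>
    norm_num [ybJ, ybP1, ybP2, ybD, Matrix.mul_apply, Fin.sum_univ_four,
      Matrix.cons_val_zero, Matrix.cons_val_one, Matrix.head_cons,
      Matrix.cons_val', Matrix.head_fin_const, Matrix.empty_val',
      Matrix.cons_val_fin_one, Matrix.vecHead, Matrix.vecTail, Matrix.cons_val_two, Matrix.cons_val_three]
lemma ybP1_P1 : ybP1 * ybP1 = 0 := by
  ext i j
  fin_cases i <;> fin_cases j <;>
    norm_num [ybJ, ybP1, ybP2, ybD, Matrix.mul_apply, Fin.sum_univ_four,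
      Matrix.cons_val_zero, Matrix.cons_val_one, Matrix.head_cons,
      Matrix.cons_val', Matrix.head_fin_const, Matrix.empty_val',
      Matrix.cons_val_fin_one, Matrix.vecHead, Matrix.vecTail, Matrix.cons_val_two, Matrix.cons_val_three]
lemma ybP1_P2 : ybP1 * ybP2 = 0 := by
  ext i j
  fin_cases i <;> fin_cases j <;>
    norm_num [ybJ, ybP1, ybP2, ybD, Matrix.mul_apply, Fin.sum_univ_four,
      Matrix.cons_val_zero, Matrix.cons_val_one, Matrix.head_cons,
      Matrix.cons_val', Matrix.head_fin_const, Matrix.empty_val',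
      Matrix.cons_val_fin_one, Matrix.vecHead, Matrix.vecTail, Matrix.cons_val_two, Matrix.cons_val_three]
lemma ybP1_D : ybP1 * ybD = 0 := by
  ext i j
  fin_cases i <;> fin_cases j <;>
    norm_num [ybJ, ybP1, ybP2, ybD, Matrix.mul_apply, Fin.sum_univ_four,
      Matrix.cons_val_zero, Matrix.cons_val_one, Matrix.head_cons,
      Matrix.cons_val', Matrix.head_fin_const, Matrix.empty_val',
      Matrix.cons_val_fin_one, Matrix.vecHead, Matrix.vecTail, Matrix.cons_val_two, Matrix.cons_val_three]
lemma ybP2_P1 : ybP2 * ybP1 = 0 := by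
  ext i j
  fin_cases i <;> fin_cases j <;>
    norm_num [ybJ, ybP1, ybP2, ybD, Matrix.mul_apply, Fin.sum_univ_four,
      Matrix.cons_val_zero, Matrix.cons_val_one, Matrix.head_cons,
      Matrix.cons_val', Matrix.head_fin_const, Matrix.empty_val',
      Matrix.cons_val_fin_one, Matrix.vecHead, Matrix.vecTail, Matrix.cons_val_two, Matrix.cons_val_three]
lemma ybP2_P2 : ybP2 * ybP2 = 0 := by
  ext i j
  fin_cases i <;> fin_cases j <;>
    norm_num [ybJ, ybP1, ybP2, ybD, Matrix.mul_apply, Fin.sum_univ_four,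
      Matrix.cons_val_zero, Matrix.cons_val_one, Matrix.head_cons,
      Matrix.cons_val', Matrix.head_fin_const, Matrix.empty_val',
      Matrix.cons_val_fin_one, Matrix.vecHead, Matrix.vecTail, Matrix.cons_val_two, Matrix.cons_val_three]
lemma ybP2_D : ybP2 * ybD = 0 := by
  ext i j
  fin_cases i <;> fin_cases j <;>
    norm_num [ybJ, ybP1, ybP2, ybD, Matrix.mul_apply, Fin.sum_univ_four,
      Matrix.cons_val_zero, Matrix.cons_val_one, Matrix.head_cons,
      Matrix.cons_val', Matrix.head_fin_const, Matrix.empty_val',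
      Matrix.cons_val_fin_one, Matrix.vecHead, Matrix.vecTail, Matrix.cons_val_two, Matrix.cons_val_three]
lemma ybD_J (μ : ℝ) : ybD * ybJ μ = 0 := by
  ext i j
  fin_cases i <;> fin_cases j <;>
    norm_num [ybJ, ybP1, ybP2, ybD, Matrix.mul_apply, Fin.sum_univ_four,
      Matrix.cons_val_zero, Matrix.cons_val_one, Matrix.head_cons,
      Matrix.cons_val', Matrix.head_fin_const, Matrix.empty_val',
      Matrix.cons_val_fin_one, Matrix.vecHead, Matrix.vecTail, Matrix.cons_val_two, Matrix.cons_val_three]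
lemma ybP1_J (μ : ℝ) : ybP1 * ybJ μ = (-1 : ℝ) • ybP2 := by
  ext i j
  fin_cases i <;> fin_cases j <;>
    norm_num [ybJ, ybP1, ybP2, ybD, Matrix.mul_apply, Fin.sum_univ_four,
      Matrix.cons_val_zero, Matrix.cons_val_one, Matrix.head_cons,
      Matrix.cons_val', Matrix.head_fin_const, Matrix.empty_val',
      Matrix.cons_val_fin_one, Matrix.vecHead, Matrix.vecTail, Matrix.cons_val_two, Matrix.cons_val_three]
lemma ybP2_J (μ : ℝ) : ybP2 * ybJ μ = (-μ) • ybP1 := by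
  ext i j
  fin_cases i <;> fin_cases j <;>
    norm_num [ybJ, ybP1, ybP2, ybD, Matrix.mul_apply, Fin.sum_univ_four,
      Matrix.cons_val_zero, Matrix.cons_val_one, Matrix.head_cons,
      Matrix.cons_val', Matrix.head_fin_const, Matrix.empty_val',
      Matrix.cons_val_fin_one, Matrix.vecHead, Matrix.vecTail, Matrix.cons_val_two, Matrix.cons_val_three]
lemma ybD_P1 : ybD * ybP1 = ybP1 := by
  ext i j
  fin_cases i <;> fin_cases j <;>
    norm_num [ybJ, ybP1, ybP2, ybD, Matrix.mul_apply, Fin.sum_univ_four,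
      Matrix.cons_val_zero, Matrix.cons_val_one, Matrix.head_cons,
      Matrix.cons_val', Matrix.head_fin_const, Matrix.empty_val',
      Matrix.cons_val_fin_one, Matrix.vecHead, Matrix.vecTail, Matrix.cons_val_two, Matrix.cons_val_three]
lemma ybD_P2 : ybD * ybP2 = ybP2 := by
  ext i j
  fin_cases i <;> fin_cases j <;>
    norm_num [ybJ, ybP1, ybP2, ybD, Matrix.mul_apply, Fin.sum_univ_four,
      Matrix.cons_val_zero, Matrix.cons_val_one, Matrix.head_cons,
      Matrix.cons_val', Matrix.head_fin_const, Matrix.empty_val',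
      Matrix.cons_val_fin_one, Matrix.vecHead, Matrix.vecTail, Matrix.cons_val_two, Matrix.cons_val_three]
lemma yb_neg_kronecker {l m n p : Type*} (A : Matrix l m ℝ) (B : Matrix n p ℝ) :
    (-A) ⊗ₖ B = -(A ⊗ₖ B) := by
  ext ⟨i, k⟩ ⟨j, l'⟩
  simp [Matrix.kroneckerMap_apply]

lemma yb_kronecker_neg {l m n p : Type*} (A : Matrix l m ℝ) (B : Matrix n p ℝ) :
    A ⊗ₖ (-B) = -(A ⊗ₖ B) := by
  ext ⟨i, k⟩ ⟨j, l'⟩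
  simp [Matrix.kroneckerMap_apply]

end aux

/-- The classical r-matrix r = J∧P₁ + D∧P₂ of the representation of g_μ satisfies
the classical Yang–Baxter equation [r₁₂,r₁₃] + [r₁₂,r₂₃] + [r₁₃,r₂₃] = 0. -/
theorem classical_yang_baxter (μ : ℝ) :
    (ybR12 μ * ybR13 μ - ybR13 μ * ybR12 μ)
      + (ybR12 μ * ybR23 μ - ybR23 μ * ybR12 μ)
      + (ybR13 μ * ybR23 μ - ybR23 μ * ybR13 μ) = 0 := by
  unfold ybR12 ybR13 ybR23
  simp only [Matrix.sub_mul, Matrix.mul_sub, Matrix.add_mul, Matrix.mul_add,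
    ← Matrix.mul_kronecker_mul, Matrix.one_mul, Matrix.mul_one,
    ybJ_P1, ybJ_P2, ybJ_D, ybP1_P1, ybP1_P2, ybP1_D, ybP2_P1, ybP2_P2, ybP2_D,
    ybD_J, ybP1_J, ybP2_J, ybD_P1, ybD_P2,
    Matrix.zero_kronecker, Matrix.kronecker_zero,
    Matrix.smul_kronecker, Matrix.kronecker_smul, yb_neg_kronecker, yb_kronecker_neg, neg_smul, one_smul]
  module
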